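/- The single-cluster score function Score_γ has sensitivity at most 1 and range [0, |D_c|]. Precisely, let γ_Int, γ_Suf ≥ 0 with γ_Int + γ_Suf = 1, and define Score_γ(D, f, c, A) = γ_Int·Int_p(D, f, c, A) + γ_Suf·Suf_p(D, f, c, A). Then: (a) for every clustering function f, label c, attribute A, dataset D and tuple t, writing D' = D + {t}, |Score_γ(D', f, c, A) − Score_γ(D, f, c, A)| ≤ 1; and (b) 0 ≤ Score_γ(D, f, c, A) ≤ |D_c|. -/

import Mathlib

noncomputable section

/-- The cluster of label `c`: the sub-multiset of tuples of `D` mapped to `c` by `f`. -/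
def cl {T C : Type*} [DecidableEq C] (D : Multiset T) (f : T → C) (c : C) : Multiset T :=
  D.filter (fun t => f t = c)

/-- Low-sensitivity interestingness. -/
def Intp {T V C : Type*} [Fintype V] [DecidableEq V] [DecidableEq C]
    (D : Multiset T) (f : T → C) (c : C) (A : T → V) : ℝ :=
  (1 / 2) * ∑ a : V,
    |(((cl D f c).map A).count a : ℝ) -
      ((Multiset.card (cl D f c) : ℝ) / (Multiset.card D : ℝ)) * ((D.map A).count a : ℝ)|

/-- Low-sensitivity sufficiency. -/
def Sufp {T V C : Type*} [Fintype V] [DecidableEq V] [DecidableEq C]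
    (D : Multiset T) (f : T → C) (c : C) (A : T → V) : ℝ :=
  ∑ a : V,
    if 0 < ((cl D f c).map A).count a then
      ((((cl D f c).map A).count a : ℝ)) ^ 2 / (((D.map A).count a : ℝ))
    else 0

/-- The single-cluster score
`Score_γ(D, f, c, A) = γ_Int·Int_p(D, f, c, A) + γ_Suf·Suf_p(D, f, c, A)`. -/
def Score {T V C : Type*} [Fintype V] [DecidableEq V] [DecidableEq C]
    (gInt gSuf : ℝ) (D : Multiset T) (f : T → C) (c : C) (A : T → V) : ℝ :=
  gInt * Intp D f c A + gSuf * Sufp D f c A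


section AuxLemmas

set_option linter.unusedSectionVars false

variable {T V C : Type*} [Fintype V] [DecidableEq V] [DecidableEq C]
variable (f : T → C) (c : C) (A : T → V)

lemma sum_count_real (s : Multiset V) :
    ∑ a : V, ((s.count a : ℝ)) = (Multiset.card s : ℝ) := by
  rw [← Nat.cast_sum]
  norm_cast
  rw [← Multiset.toFinset_sum_count_eq s]
  exact (Finset.sum_subset (Finset.subset_univ _)
    (fun a _ ha => Multiset.count_eq_zero_of_notMem (by simpa using ha))).symm

lemma k_le_cnt (D : Multiset T) (a : V) :
    ((cl D f c).map A).count a ≤ (D.map A).count a :=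
  Multiset.count_le_of_le _ (Multiset.map_le_map (Multiset.filter_le _ _))

lemma cl_cons (D : Multiset T) (t : T) :
    cl (t ::ₘ D) f c = if f t = c then t ::ₘ cl D f c else cl D f c := by
  simp only [cl, Multiset.filter_cons]
  split_ifs <;> simp

lemma suf_core0 (k c : ℝ) (hk : 0 ≤ k) (hkc : k ≤ c) :
    |k ^ 2 / (c + 1) - k ^ 2 / c| ≤ 1 := by
  rcases eq_or_lt_of_le hk with h | h
  · simp [← h]
  · have hc : 0 < c := lt_of_lt_of_le h hkc
    have h1 : k ^ 2 / (c + 1) - k ^ 2 / c = -(k ^ 2 / (c * (c + 1))) := by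
      field_simp; ring
    rw [h1, abs_neg, abs_of_nonneg (by positivity), div_le_one (by positivity)]
    nlinarith

lemma suf_core1 (k c : ℝ) (hk : 0 ≤ k) (hkc : k ≤ c) :
    |(k + 1) ^ 2 / (c + 1) - k ^ 2 / c| ≤ 1 := by
  have hc0 : 0 ≤ c := le_trans hk hkc
  rcases eq_or_lt_of_le hc0 with h | hc
  · have hk0 : k = 0 := le_antisymm (h ▸ hkc) hk
    subst hk0; rw [← h]; norm_num
  · have hc1 : (0:ℝ) < c + 1 := by linarith
    rw [div_sub_div _ _ hc1.ne' hc.ne', abs_div, abs_of_pos (mul_pos hc1 hc),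
      div_le_one (mul_pos hc1 hc), abs_le]
    constructor <;> nlinarith [sq_nonneg (c - k), mul_nonneg hk hc0]

lemma Sufp_eq (D : Multiset T) :
    Sufp D f c A = ∑ a : V,
      ((((cl D f c).map A).count a : ℝ)) ^ 2 / (((D.map A).count a : ℝ)) := by
  refine Finset.sum_congr rfl fun a _ => ?_
  split_ifs with h
  · rfl
  · have h0 : ((cl D f c).map A).count a = 0 := by omega
    simp [h0]

lemma Sufp_nonneg (D : Multiset T) : 0 ≤ Sufp D f c A := by
  rw [Sufp_eq]
  exact Finset.sum_nonneg fun a _ => by positivity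

lemma Sufp_le (D : Multiset T) :
    Sufp D f c A ≤ (Multiset.card (cl D f c) : ℝ) := by
  rw [Sufp_eq]
  have h : ∀ a ∈ Finset.univ, ((((cl D f c).map A).count a : ℝ)) ^ 2 /
      (((D.map A).count a : ℝ)) ≤ (((cl D f c).map A).count a : ℝ) := by
    intro a _
    rcases Nat.eq_zero_or_pos ((D.map A).count a) with h0 | h0
    · have : ((cl D f c).map A).count a = 0 := by
        have := k_le_cnt f c A D a; omega
      simp [this, h0]
    · rw [div_le_iff₀ (by exact_mod_cast h0)]
      have := k_le_cnt f c A D a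
      have hk : (0:ℝ) ≤ (((cl D f c).map A).count a : ℝ) := by positivity
      nlinarith [ (by exact_mod_cast this : ((((cl D f c).map A).count a : ℝ)) ≤ ((D.map A).count a : ℝ)) ]
  calc ∑ a : V, ((((cl D f c).map A).count a : ℝ)) ^ 2 / (((D.map A).count a : ℝ))
      ≤ ∑ a : V, (((cl D f c).map A).count a : ℝ) := Finset.sum_le_sum h
    _ = (Multiset.card ((cl D f c).map A) : ℝ) := sum_count_real _
    _ = (Multiset.card (cl D f c) : ℝ) := by rw [Multiset.card_map]

lemma Sufp_sens (D : Multiset T) (t : T) :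
    |Sufp (t ::ₘ D) f c A - Sufp D f c A| ≤ 1 := by
  rw [Sufp_eq, Sufp_eq, ← Finset.sum_sub_distrib]
  set b := A t with hb
  have hcnt : ∀ a : V, ((t ::ₘ D).map A).count a
      = (D.map A).count a + if a = b then 1 else 0 := by
    intro a; rw [Multiset.map_cons, Multiset.count_cons]
  have hK : (0:ℝ) ≤ (((cl D f c).map A).count b : ℝ) := by positivity
  have hKC : ((((cl D f c).map A).count b : ℝ)) ≤ (((D.map A).count b : ℝ)) := by
    exact_mod_cast k_le_cnt f c A D b
  by_cases hft : f t = c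
  · have hk' : ∀ a : V, ((cl (t ::ₘ D) f c).map A).count a
        = ((cl D f c).map A).count a + if a = b then 1 else 0 := by
      intro a; rw [cl_cons, if_pos hft, Multiset.map_cons, Multiset.count_cons]
    rw [Finset.sum_eq_single b]
    · rw [hk' b, hcnt b, if_pos rfl]
      push_cast
      exact suf_core1 _ _ hK hKC
    · intro a _ hab
      rw [hk' a, hcnt a, if_neg hab]
      simp
    · intro h; exact absurd (Finset.mem_univ b) h
  · have hk' : ∀ a : V, ((cl (t ::ₘ D) f c).map A).count a
        = ((cl D f c).map A).count a := by
      intro a; rw [cl_cons, if_neg hft]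
    rw [Finset.sum_eq_single b]
    · rw [hk' b, hcnt b, if_pos rfl]
      push_cast
      exact suf_core0 _ _ hK hKC
    · intro a _ hab
      rw [hk' a, hcnt a, if_neg hab]
      simp
    · intro h; exact absurd (Finset.mem_univ b) h

lemma card_cl_le (D : Multiset T) :
    Multiset.card (cl D f c) ≤ Multiset.card D :=
  Multiset.card_le_card (Multiset.filter_le _ _)

lemma int_core (N M B E : ℝ) (hN : 1 ≤ N) (hM0 : 0 ≤ M) (hMN : M ≤ N)
    (hB0 : 0 ≤ B) (hBN : B ≤ N) (hE : E = 0 ∨ E = 1) :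
    |E - (M + E) / (N + 1) * (B + 1) + M / N * B| +
      |M / N - (M + E) / (N + 1)| * (N - B) ≤ 2 := by
  have hN0 : (0:ℝ) < N := lt_of_lt_of_le one_pos hN
  have hN1 : (0:ℝ) < N + 1 := by linarith
  have hNB : 0 ≤ N - B := by linarith
  rcases hE with hE | hE <;> subst hE
  · have h1 : M / N - (M + 0) / (N + 1) = M / (N * (N + 1)) := by
      field_simp; ring
    have h2 : (0:ℝ) - (M + 0) / (N + 1) * (B + 1) + M / N * B
        = -(M * (N - B) / (N * (N + 1))) := by
      field_simp; ring
    rw [h2, h1, abs_neg, abs_of_nonneg (div_nonneg (mul_nonneg hM0 hNB) (by positivity)),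
      abs_of_nonneg (div_nonneg hM0 (by positivity))]
    rw [show M * (N - B) / (N * (N + 1)) + M / (N * (N + 1)) * (N - B)
        = 2 * (M * (N - B)) / (N * (N + 1)) from by ring]
    rw [div_le_iff₀ (by positivity)]
    nlinarith
  · have h1 : M / N - (M + 1) / (N + 1) = -((N - M) / (N * (N + 1))) := by
      field_simp; ring
    have h2 : (1:ℝ) - (M + 1) / (N + 1) * (B + 1) + M / N * B
        = (N - M) * (N - B) / (N * (N + 1)) := by
      field_simp; ring
    have hNM : 0 ≤ N - M := by linarith
    rw [h2, h1, abs_neg, abs_of_nonneg (div_nonneg (mul_nonneg hNM hNB) (by positivity)),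
      abs_of_nonneg (div_nonneg hNM (by positivity))]
    rw [show (N - M) * (N - B) / (N * (N + 1)) + (N - M) / (N * (N + 1)) * (N - B)
        = 2 * ((N - M) * (N - B)) / (N * (N + 1)) from by ring]
    rw [div_le_iff₀ (by positivity)]
    nlinarith

lemma Intp_nonneg (D : Multiset T) : 0 ≤ Intp D f c A := by
  unfold Intp
  have : 0 ≤ ∑ a : V, |(((cl D f c).map A).count a : ℝ) -
      ((Multiset.card (cl D f c) : ℝ) / (Multiset.card D : ℝ)) * ((D.map A).count a : ℝ)| :=
    Finset.sum_nonneg fun a _ => abs_nonneg _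
  linarith

lemma Intp_le (D : Multiset T) :
    Intp D f c A ≤ (Multiset.card (cl D f c) : ℝ) := by
  unfold Intp
  have hm0 : (0:ℝ) ≤ (Multiset.card (cl D f c) : ℝ) := by positivity
  have hbound : ∀ a ∈ Finset.univ, |(((cl D f c).map A).count a : ℝ) -
      ((Multiset.card (cl D f c) : ℝ) / (Multiset.card D : ℝ)) * ((D.map A).count a : ℝ)|
      ≤ (((cl D f c).map A).count a : ℝ) +
        ((Multiset.card (cl D f c) : ℝ) / (Multiset.card D : ℝ)) * ((D.map A).count a : ℝ) := by
    intro a _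
    have h1 : (0:ℝ) ≤ (((cl D f c).map A).count a : ℝ) := by positivity
    have h2 : (0:ℝ) ≤ ((Multiset.card (cl D f c) : ℝ) / (Multiset.card D : ℝ)) *
        ((D.map A).count a : ℝ) := by positivity
    rw [abs_sub_le_iff]; constructor <;> linarith
  have hsum := Finset.sum_le_sum hbound
  rw [Finset.sum_add_distrib, ← Finset.mul_sum, sum_count_real, sum_count_real,
    Multiset.card_map, Multiset.card_map] at hsum
  have hlast : (Multiset.card (cl D f c) : ℝ) / (Multiset.card D : ℝ) * (Multiset.card D : ℝ)
      ≤ (Multiset.card (cl D f c) : ℝ) := by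
    rcases eq_or_ne ((Multiset.card D : ℝ)) 0 with h | h
    · rw [h]; simpa using hm0
    · rw [div_mul_cancel₀ _ h]
  linarith

lemma Intp_sens (D : Multiset T) (t : T) :
    |Intp (t ::ₘ D) f c A - Intp D f c A| ≤ 1 := by
  rcases eq_or_ne D 0 with rfl | hD
  · -- base case: D empty
    have h0 : Intp (0 : Multiset T) f c A = 0 := by
      simp [Intp, cl]
    have h1 : Intp (t ::ₘ (0 : Multiset T)) f c A = 0 := by
      unfold Intp
      rw [mul_eq_zero]; right
      apply Finset.sum_eq_zero
      intro a _
      rw [abs_eq_zero]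
      by_cases hft : f t = c
      · rw [cl_cons, if_pos hft]
        simp [cl]
      · rw [cl_cons, if_neg hft]
        simp [cl]
    rw [h0, h1]; norm_num
  · have hn : 0 < Multiset.card D := Multiset.card_pos.mpr hD
    set b := A t with hb
    set N := (Multiset.card D : ℝ) with hN
    set M := (Multiset.card (cl D f c) : ℝ) with hM
    set K : V → ℝ := fun a => (((cl D f c).map A).count a : ℝ) with hKdef
    set CT : V → ℝ := fun a => ((D.map A).count a : ℝ) with hCTdef
    set E : ℝ := if f t = c then 1 else 0 with hE
    have hN1 : 1 ≤ N := by rw [hN]; exact_mod_cast hn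
    have hN0 : (0:ℝ) < N := lt_of_lt_of_le one_pos hN1
    have hcnt' : ∀ a : V, (((t ::ₘ D).map A).count a : ℝ) = CT a + (if a = b then 1 else 0) := by
      intro a
      rw [Multiset.map_cons, Multiset.count_cons]
      push_cast
      split_ifs <;> simp [hCTdef]
    have hk' : ∀ a : V, (((cl (t ::ₘ D) f c).map A).count a : ℝ)
        = K a + (if a = b then E else 0) := by
      intro a
      by_cases hft : f t = c
      · rw [cl_cons, if_pos hft, Multiset.map_cons, Multiset.count_cons, hE, if_pos hft]
        push_cast
        split_ifs <;> simp [hKdef]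
      · rw [cl_cons, if_neg hft, hE, if_neg hft]
        simp [hKdef]
    have hm' : (Multiset.card (cl (t ::ₘ D) f c) : ℝ) = M + E := by
      by_cases hft : f t = c
      · rw [cl_cons, if_pos hft, hE, if_pos hft]; push_cast [Multiset.card_cons]; ring
      · rw [cl_cons, if_neg hft, hE, if_neg hft]; simp [hM]
    have hn' : (Multiset.card (t ::ₘ D) : ℝ) = N + 1 := by
      rw [Multiset.card_cons]; push_cast; ring
    set U : V → ℝ := fun a => K a - M / N * CT a with hU
    set U' : V → ℝ := fun a => (K a + (if a = b then E else 0))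
      - (M + E) / (N + 1) * (CT a + (if a = b then 1 else 0)) with hU'
    have hI : Intp D f c A = (1/2) * ∑ a : V, |U a| := rfl
    have hI' : Intp (t ::ₘ D) f c A = (1/2) * ∑ a : V, |U' a| := by
      unfold Intp
      congr 1
      refine Finset.sum_congr rfl fun a _ => ?_
      rw [hk' a, hcnt' a, hm', hn']
    -- key bound
    have hEk : E = 0 ∨ E = 1 := by rw [hE]; split_ifs <;> simp
    have hCTb : CT b ≤ N := by
      have := Multiset.count_le_card b (D.map A)
      rw [Multiset.card_map] at this
      show ((Multiset.count b (D.map A) : ℝ)) ≤ ((Multiset.card D : ℝ))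
      exact_mod_cast this
    have hCTb0 : 0 ≤ CT b := by positivity
    have hM0 : 0 ≤ M := by positivity
    have hMN : M ≤ N := by
      show ((Multiset.card (cl D f c) : ℝ)) ≤ ((Multiset.card D : ℝ))
      exact_mod_cast Multiset.card_le_card (Multiset.filter_le _ _)
    have hsumCT : ∑ a : V, CT a = N := by
      rw [hCTdef, hN, sum_count_real, Multiset.card_map]
    have key : ∑ a : V, |U' a - U a| ≤ 2 := by
      have hsplit : ∑ a : V, |U' a - U a|
          = |U' b - U b| + ∑ a ∈ Finset.univ.erase b, |U' a - U a| :=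
        (Finset.add_sum_erase _ _ (Finset.mem_univ b)).symm
      have herase : ∀ a ∈ Finset.univ.erase b, |U' a - U a|
          = |M / N - (M + E) / (N + 1)| * CT a := by
        intro a ha
        have hab : a ≠ b := Finset.ne_of_mem_erase ha
        have : U' a - U a = (M / N - (M + E) / (N + 1)) * CT a := by
          simp only [hU', hU, if_neg hab]; ring
        rw [this, abs_mul, abs_of_nonneg (by positivity : (0:ℝ) ≤ CT a)]
      have hsum_erase : ∑ a ∈ Finset.univ.erase b, CT a = N - CT b := by
        have := Finset.add_sum_erase Finset.univ CT (Finset.mem_univ b)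
        rw [hsumCT] at this
        linarith
      have hb_term : U' b - U b = E - (M + E) / (N + 1) * (CT b + 1) + M / N * CT b := by
        have h1 : U' b = (K b + E) - (M + E) / (N + 1) * (CT b + 1) := by
          simp [hU']
        have h2 : U b = K b - M / N * CT b := rfl
        rw [h1, h2]; ring
      rw [hsplit, Finset.sum_congr rfl herase, ← Finset.mul_sum, hsum_erase, hb_term]
      exact int_core N M (CT b) E hN1 hM0 hMN hCTb0 hCTb hEk
    calc |Intp (t ::ₘ D) f c A - Intp D f c A|
        = (1/2) * |∑ a : V, (|U' a| - |U a|)| := by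
          rw [hI', hI, ← mul_sub, abs_mul, Finset.sum_sub_distrib]
          norm_num
      _ ≤ (1/2) * ∑ a : V, |(|U' a| - |U a|)| := by
          have := Finset.abs_sum_le_sum_abs (fun a => |U' a| - |U a|) Finset.univ
          linarith
      _ ≤ (1/2) * ∑ a : V, |U' a - U a| := by
          have h : ∀ a ∈ Finset.univ, |(|U' a| - |U a|)| ≤ |U' a - U a| :=
            fun a _ => abs_abs_sub_abs_le_abs_sub _ _
          have := Finset.sum_le_sum h
          linarith
      _ ≤ (1/2) * 2 := by linarith
      _ = 1 := by norm_num

end AuxLemmas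

/-- The single-cluster score `Score_γ` has sensitivity at most `1` and range
`[0, |D_c|]`, for nonnegative weights `γ_Int + γ_Suf = 1`. -/
theorem score_sensitivity_and_range {T V C : Type*} [Fintype V] [DecidableEq V] [DecidableEq C]
    (gInt gSuf : ℝ) (hInt : 0 ≤ gInt) (hSuf : 0 ≤ gSuf) (hsum : gInt + gSuf = 1)
    (f : T → C) (c : C) (A : T → V) :
    (∀ (D : Multiset T) (t : T),
      |Score gInt gSuf (t ::ₘ D) f c A - Score gInt gSuf D f c A| ≤ 1) ∧
    (∀ D : Multiset T,
      0 ≤ Score gInt gSuf D f c A ∧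
      Score gInt gSuf D f c A ≤ (Multiset.card (cl D f c) : ℝ)) := by
  constructor
  · intro D t
    have h1 := Intp_sens f c A D t
    have h2 := Sufp_sens f c A D t
    have hdiff : Score gInt gSuf (t ::ₘ D) f c A - Score gInt gSuf D f c A
        = gInt * (Intp (t ::ₘ D) f c A - Intp D f c A)
          + gSuf * (Sufp (t ::ₘ D) f c A - Sufp D f c A) := by
      unfold Score; ring
    calc |Score gInt gSuf (t ::ₘ D) f c A - Score gInt gSuf D f c A|
        ≤ |gInt * (Intp (t ::ₘ D) f c A - Intp D f c A)|
          + |gSuf * (Sufp (t ::ₘ D) f c A - Sufp D f c A)| := by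
          rw [hdiff]; exact abs_add_le _ _
      _ = gInt * |Intp (t ::ₘ D) f c A - Intp D f c A|
          + gSuf * |Sufp (t ::ₘ D) f c A - Sufp D f c A| := by
          rw [abs_mul, abs_mul, abs_of_nonneg hInt, abs_of_nonneg hSuf]
      _ ≤ gInt * 1 + gSuf * 1 := by
          gcongr
      _ = 1 := by rw [mul_one, mul_one, hsum]
  · intro D
    have hI0 := Intp_nonneg f c A D
    have hS0 := Sufp_nonneg f c A D
    have hI1 := Intp_le f c A D
    have hS1 := Sufp_le f c A D
    constructor
    · exact add_nonneg (mul_nonneg hInt hI0) (mul_nonneg hSuf hS0)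
    · calc Score gInt gSuf D f c A
          ≤ gInt * (Multiset.card (cl D f c) : ℝ)
            + gSuf * (Multiset.card (cl D f c) : ℝ) := by
            unfold Score; gcongr
        _ = (Multiset.card (cl D f c) : ℝ) := by
            rw [← add_mul, hsum, one_mul]
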